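/- Let G be a graph with two distinct vertices s, t and two distinct vertices s', t', and let k be a nonnegative integer. Let H be the graph obtained from G by adding two new vertices u and v, where u is adjacent exactly to s and t, and v is adjacent exactly to s' and t'. Then G contains two vertex-disjoint paths between {s,t} and {s',t'} (each path having one endpoint in {s,t} and the other endpoint in {s',t'}, and the two paths together covering all four endpoints) of total length at least k if and only if H contains a cycle of length at least k + 4 passing through both u and v. -/

import Mathlib

open SimpleGraph

/-- The minimum degree of a finite simple graph (0 for the empty graph). -/
noncomputable def minDeg {W : Type*} [Finite W] (H : SimpleGraph W) : ℕ :=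
  letI := Fintype.ofFinite W
  letI : DecidableRel H.Adj := Classical.decRel _
  H.minDegree

/-- `delMinDeg G B` is `δ(G − B)`, the minimum degree of the subgraph of `G`
induced on the complement of `B`. -/
noncomputable def delMinDeg {V : Type*} [Finite V] (G : SimpleGraph V) (B : Set V) : ℕ :=
  minDeg (G.induce Bᶜ)

/-- A graph is 2-connected if it is connected, has at least three vertices,
and stays connected after removal of any single vertex. -/
def IsTwoConnected {W : Type*} (H : SimpleGraph W) : Prop :=
  H.Connected ∧ 3 ≤ Nat.card W ∧ ∀ v : W, (H.induce {w | w ≠ v}).Connected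

/-- The set of vertices of a walk. -/
def suppSet {V : Type*} {G : SimpleGraph V} {u v : V} (p : G.Walk u v) : Set V :=
  {x | x ∈ p.support}

/-- `IsCompOf G A H` : `H` is the vertex set of a connected component of the subgraph
of `G` induced on `A`, i.e. a maximal nonempty connected subset of `A`. -/
def IsCompOf {V : Type*} (G : SimpleGraph V) (A H : Set V) : Prop :=
  H ⊆ A ∧ H.Nonempty ∧ (G.induce H).Connected ∧
    ∀ H' : Set V, H ⊆ H' → H' ⊆ A → (G.induce H').Connected → H' = H

/-- `CutVertex G H v` : `v` is a cut-vertex of the subgraph of `G` induced on `H`. -/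
def CutVertex {V : Type*} (G : SimpleGraph V) (H : Set V) (v : V) : Prop :=
  v ∈ H ∧ ¬ (G.induce (H \ {v})).Connected

/-- `IsBlock G H B` : `B` is a block (inclusion-maximal connected induced subgraph
without cut-vertices) of the subgraph of `G` induced on `H`. -/
def IsBlock {V : Type*} (G : SimpleGraph V) (H B : Set V) : Prop :=
  B ⊆ H ∧ B.Nonempty ∧ (G.induce B).Connected ∧ (∀ v, ¬ CutVertex G B v) ∧
    ∀ B' : Set V, B ⊆ B' → B' ⊆ H → (G.induce B').Connected →
      (∀ v, ¬ CutVertex G B' v) → B' = B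

/-- `IsLeafBlock G H B` : `B` is a leaf-block of the subgraph of `G` induced on `H`;
equivalently, a block containing at most one cut-vertex of `H`. -/
def IsLeafBlock {V : Type*} (G : SimpleGraph V) (H B : Set V) : Prop :=
  IsBlock G H B ∧
    ∀ c₁ c₂, c₁ ∈ B → c₂ ∈ B → CutVertex G H c₁ → CutVertex G H c₂ → c₁ = c₂

/-- The maximum size of a matching in `G` between `A` and `B` is exactly one. -/
def MaxMatchingOne {V : Type*} (G : SimpleGraph V) (A B : Set V) : Prop :=
  (∃ a ∈ A, ∃ b ∈ B, G.Adj a b) ∧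
  ∀ a₁ ∈ A, ∀ b₁ ∈ B, ∀ a₂ ∈ A, ∀ b₂ ∈ B,
    G.Adj a₁ b₁ → G.Adj a₂ b₂ → a₁ = a₂ ∨ b₁ = b₂

/-- Type (R1)/(D1) component. -/
def TypeR1 {V : Type*} (G : SimpleGraph V) (H Q₁ Q₂ : Set V) : Prop :=
  IsTwoConnected (G.induce H) ∧ MaxMatchingOne G H Q₁ ∧ MaxMatchingOne G H Q₂

/-- Type (R2)/(D2) component (type (R3)/(D3) is obtained by swapping `Q₁` and `Q₂`). -/
def TypeR2 {V : Type*} (G : SimpleGraph V) (H Q₁ Q₂ : Set V) : Prop :=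
  ¬ IsTwoConnected (G.induce H) ∧
  (∃! x, x ∈ Q₁ ∧ ∃ y ∈ H, G.Adj x y) ∧
  ∀ B : Set V, IsLeafBlock G H B →
    ∀ v ∈ B, ¬ CutVertex G H v → ∀ w ∈ Q₂, ¬ G.Adj v w

/-- A component `H` has at least 3 vertices and is of one of the types (R1), (R2), (R3). -/
def GoodComp {V : Type*} (G : SimpleGraph V) (Q₁ Q₂ H : Set V) : Prop :=
  3 ≤ H.ncard ∧ (TypeR1 G H Q₁ Q₂ ∨ TypeR2 G H Q₁ Q₂ ∨ TypeR2 G H Q₂ Q₁)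

/-- The two disjoint paths `P₁`, `P₂` induce an Erdős–Gallai decomposition for the
`(s,t)`-path `P₁ ++ Pm ++ P₂` in `G`. -/
def InducesEGDecomp {V : Type*} [Finite V] (G : SimpleGraph V) {s t a b : V}
    (P₁ : G.Walk s a) (Pm : G.Walk a b) (P₂ : G.Walk b t) : Prop :=
  P₁.IsPath ∧ P₂.IsPath ∧ Disjoint (suppSet P₁) (suppSet P₂) ∧
  (P₁.append (Pm.append P₂)).IsPath ∧
  delMinDeg G {s, t} ≤ Pm.length ∧
  (∃ H₁ H₂ : Set V, H₁ ≠ H₂ ∧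
      IsCompOf G (suppSet P₁ ∪ suppSet P₂)ᶜ H₁ ∧
      IsCompOf G (suppSet P₁ ∪ suppSet P₂)ᶜ H₂) ∧
  ∀ H : Set V, IsCompOf G (suppSet P₁ ∪ suppSet P₂)ᶜ H →
    GoodComp G (suppSet P₁) (suppSet P₂) H

/-- `M` is an Erdős–Gallai component (resp. a Dirac component) of a decomposition whose
deleted paths have vertex sets `Q₁` and `Q₂`: either a component of type (R1),
or a leaf-block of a component of type (R2) or (R3). -/
def IsEGComponent {V : Type*} (G : SimpleGraph V) (Q₁ Q₂ M : Set V) : Prop :=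
  (IsCompOf G (Q₁ ∪ Q₂)ᶜ M ∧ TypeR1 G M Q₁ Q₂) ∨
  (∃ H : Set V, IsCompOf G (Q₁ ∪ Q₂)ᶜ H ∧ (TypeR2 G H Q₁ Q₂ ∨ TypeR2 G H Q₂ Q₁) ∧
      IsLeafBlock G H M)

/-- A walk enters a vertex set `M` if it traverses an edge with both endpoints in `M`. -/
def WalkEnters {V : Type*} {G : SimpleGraph V} {u v : V} (P : G.Walk u v) (M : Set V) : Prop :=
  ∃ x y : V, x ∈ M ∧ y ∈ M ∧ s(x, y) ∈ P.edges

/-- The vertices of `S` visited by the walk `P` appear consecutively on `P`. -/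
def ConsecutiveOn {V : Type*} {G : SimpleGraph V} {u v : V} (P : G.Walk u v) (S : Set V) : Prop :=
  ∃ l₁ l₂ l₃ : List V, P.support = l₁ ++ l₂ ++ l₃ ∧
    ∀ x : V, x ∈ l₂ ↔ (x ∈ S ∧ x ∈ P.support)

/-- The two disjoint paths `P₁`, `P₂` induce a Dirac decomposition for the cycle
`P₁ ++ Pm ++ P₂ ++ Pm'` in `G`. -/
def InducesDiracDecomp {V : Type*} [Finite V] (G : SimpleGraph V) {s a b c : V}
    (P₁ : G.Walk s a) (Pm : G.Walk a b) (P₂ : G.Walk b c) (Pm' : G.Walk c s) : Prop :=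
  (P₁.append (Pm.append (P₂.append Pm'))).IsCycle ∧
  2 * minDeg G ≤ (P₁.append (Pm.append (P₂.append Pm'))).length ∧
  P₁.IsPath ∧ P₂.IsPath ∧ Disjoint (suppSet P₁) (suppSet P₂) ∧
  minDeg G - 2 ≤ Pm.length ∧ minDeg G - 2 ≤ Pm'.length ∧
  (∀ H : Set V, IsCompOf G (suppSet P₁ ∪ suppSet P₂)ᶜ H →
      GoodComp G (suppSet P₁) (suppSet P₂) H) ∧
  IsCompOf G (suppSet P₁ ∪ suppSet P₂)ᶜ (suppSet Pm \ {a, b}) ∧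
  IsCompOf G (suppSet P₁ ∪ suppSet P₂)ᶜ (suppSet Pm' \ {c, s})

/-- The graph obtained from `G` by adding two new vertices `u = Sum.inr false` and
`v = Sum.inr true`, where `u` is adjacent exactly to `s` and `t`, and `v` is adjacent
exactly to `s'` and `t'`. -/
def addTwoApexes {V : Type*} (G : SimpleGraph V) (s t s' t' : V) :
    SimpleGraph (V ⊕ Bool) :=
  SimpleGraph.fromRel (fun x y =>
    (∃ a b : V, x = Sum.inl a ∧ y = Sum.inl b ∧ G.Adj a b) ∨
    (x = Sum.inr false ∧ (y = Sum.inl s ∨ y = Sum.inl t)) ∨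
    (x = Sum.inr true ∧ (y = Sum.inl s' ∨ y = Sum.inl t')))

section ApexHelpers

variable {V : Type*} {G : SimpleGraph V} {s t s' t' : V}

lemma apex_adj_inl_inl {a b : V} :
    (addTwoApexes G s t s' t').Adj (Sum.inl a) (Sum.inl b) ↔ G.Adj a b := by
  simp only [addTwoApexes, fromRel_adj]
  constructor
  · rintro ⟨hne, (⟨a', b', ha, hb, hadj⟩ | ⟨h, _⟩ | ⟨h, _⟩) |
      (⟨a', b', ha, hb, hadj⟩ | ⟨h, _⟩ | ⟨h, _⟩)⟩
    · obtain rfl := Sum.inl.inj ha; obtain rfl := Sum.inl.inj hb; exact hadj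
    · exact absurd h (by simp)
    · exact absurd h (by simp)
    · obtain rfl := Sum.inl.inj ha; obtain rfl := Sum.inl.inj hb; exact hadj.symm
    · exact absurd h (by simp)
    · exact absurd h (by simp)
  · intro h
    exact ⟨by simp [h.ne], Or.inl (Or.inl ⟨a, b, rfl, rfl, h⟩)⟩

lemma apex_adj_u {z : V ⊕ Bool} :
    (addTwoApexes G s t s' t').Adj (Sum.inr false) z ↔ z = Sum.inl s ∨ z = Sum.inl t := by
  simp only [addTwoApexes, fromRel_adj]
  constructor
  · rintro ⟨hne, h | h⟩ <;> rcases h with (⟨a', b', ha, hb, hadj⟩ | ⟨h1, h2⟩ | ⟨h1, h2⟩) <;>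
      simp_all
  · rintro (rfl | rfl)
    · exact ⟨by simp, Or.inl (Or.inr (Or.inl ⟨trivial, Or.inl rfl⟩))⟩
    · exact ⟨by simp, Or.inl (Or.inr (Or.inl ⟨trivial, Or.inr rfl⟩))⟩

lemma apex_adj_v {z : V ⊕ Bool} :
    (addTwoApexes G s t s' t').Adj (Sum.inr true) z ↔ z = Sum.inl s' ∨ z = Sum.inl t' := by
  simp only [addTwoApexes, fromRel_adj]
  constructor
  · rintro ⟨hne, h | h⟩ <;> rcases h with (⟨a', b', ha, hb, hadj⟩ | ⟨h1, h2⟩ | ⟨h1, h2⟩) <;>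
      simp_all
  · rintro (rfl | rfl)
    · exact ⟨by simp, Or.inl (Or.inr (Or.inr ⟨trivial, Or.inl rfl⟩))⟩
    · exact ⟨by simp, Or.inl (Or.inr (Or.inr ⟨trivial, Or.inr rfl⟩))⟩

lemma apex_pullback {x y : V ⊕ Bool} (W : (addTwoApexes G s t s' t').Walk x y)
    (hW : ∀ z ∈ W.support, ∃ z0 : V, z = Sum.inl z0) :
    ∀ x0 y0 : V, x = Sum.inl x0 → y = Sum.inl y0 →
      ∃ W0 : G.Walk x0 y0, W.support = W0.support.map Sum.inl := by
  induction W with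
  | nil =>
    intro x0 y0 hx hy
    obtain rfl : x0 = y0 := Sum.inl.inj (hx ▸ hy)
    exact ⟨Walk.nil, by simp [hx]⟩
  | @cons c d e h q ih =>
    intro x0 y0 hx hy
    obtain ⟨z0, hz⟩ := hW d (by simp)
    have hG : G.Adj x0 z0 := by
      rw [hx, hz] at h; exact apex_adj_inl_inl.mp h
    obtain ⟨q0, hq0⟩ := ih (fun z hzmem => hW z (by simp [hzmem])) z0 y0 hz hy
    exact ⟨Walk.cons hG q0, by simp [hx, hq0]⟩

lemma mem_support_tail_of_closed {W : Type*} {H : SimpleGraph W} {w x : W}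
    (C : H.Walk w w) (hC : ¬C.Nil) (hx : x ∈ C.support) : x ∈ C.support.tail := by
  cases C with
  | nil => simp at hC
  | cons h q =>
    simp only [Walk.support_cons, List.tail_cons]
    rcases List.mem_cons.mp hx with rfl | h'
    · exact q.end_mem_support
    · exact h'

lemma apex_extract (hst' : s' ≠ t')
    (P : (addTwoApexes G s t s' t').Walk (Sum.inl s) (Sum.inl t))
    (hP : P.IsPath) (hu : Sum.inr false ∉ P.support) (hv : Sum.inr true ∈ P.support) :
    ∃ a b : V, ({a, b} : Set V) = {s', t'} ∧
      ∃ (p : G.Walk s a) (q : G.Walk t b), p.IsPath ∧ q.IsPath ∧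
        Disjoint (suppSet p) (suppSet q) ∧ p.length + q.length + 2 = P.length := by
  classical
  set A := P.takeUntil _ hv with hA_def
  set B := P.dropUntil _ hv with hB_def
  have hspec : A.append B = P := P.take_spec hv
  have hA : A.IsPath := hP.takeUntil hv
  have hB : B.IsPath := hP.dropUntil hv
  have hPsupp : P.support = A.support ++ B.support.tail := by
    conv_lhs => rw [← hspec]
    exact Walk.support_append _ _
  -- destructure B
  have hBnil : ¬B.Nil := Walk.not_nil_of_ne (by simp)
  obtain ⟨b', hvb, B', hBeq⟩ := Walk.not_nil_iff.mp hBnil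
  -- destructure A from the end
  have hARnil : ¬A.reverse.Nil := Walk.not_nil_of_ne (by simp)
  obtain ⟨a', hva, A2, hAeq⟩ := Walk.not_nil_iff.mp hARnil
  have ha' := apex_adj_v.mp hva
  have hb' := apex_adj_v.mp hvb
  have hAsupp : A.support = A2.support.reverse ++ [Sum.inr true] := by
    have : A.support = A.reverse.support.reverse := by simp [Walk.support_reverse]
    rw [this, hAeq]
    simp
  have hBsupp : B.support = Sum.inr true :: B'.support := by rw [hBeq]; simp
  have hPsupp2 : P.support = A2.support.reverse ++ Sum.inr true :: B'.support := by
    rw [hPsupp, hAsupp, hBsupp]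
    simp
  have hnd : (A2.support.reverse ++ Sum.inr true :: B'.support).Nodup := by
    rw [← hPsupp2]; exact hP.support_nodup
  rw [List.nodup_append] at hnd
  obtain ⟨hndA, hndB, hdisjAB⟩ := hnd
  have hvA2 : Sum.inr true ∉ A2.support := by
    intro h
    exact hdisjAB _ (by simpa using h) _ List.mem_cons_self rfl
  have hvB' : Sum.inr true ∉ B'.support := (List.nodup_cons.mp hndB).1
  have hndB' : B'.support.Nodup := (List.nodup_cons.mp hndB).2
  have hndA2 : A2.support.Nodup := by simpa using hndA
  -- membership helpers
  have hmemA : ∀ z ∈ A2.support, z ∈ P.support := by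
    intro z hz; rw [hPsupp2]; exact List.mem_append_left _ (by simpa using hz)
  have hmemB : ∀ z ∈ B'.support, z ∈ P.support := by
    intro z hz; rw [hPsupp2]; exact List.mem_append_right _ (by simp [hz])
  have hinlA : ∀ z ∈ A2.support, ∃ z0 : V, z = Sum.inl z0 := by
    intro z hz
    match z with
    | Sum.inl z0 => exact ⟨z0, rfl⟩
    | Sum.inr false => exact absurd (hmemA _ hz) hu
    | Sum.inr true => exact absurd hz hvA2
  have hinlB : ∀ z ∈ B'.support, ∃ z0 : V, z = Sum.inl z0 := by
    intro z hz
    match z with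
    | Sum.inl z0 => exact ⟨z0, rfl⟩
    | Sum.inr false => exact absurd (hmemB _ hz) hu
    | Sum.inr true => exact absurd hz hvB'
  obtain ⟨a0, ha0, ha0mem⟩ : ∃ a0 : V, a' = Sum.inl a0 ∧ (a0 = s' ∨ a0 = t') := by
    rcases ha' with rfl | rfl
    exacts [⟨s', rfl, Or.inl rfl⟩, ⟨t', rfl, Or.inr rfl⟩]
  obtain ⟨b0, hb0, hb0mem⟩ : ∃ b0 : V, b' = Sum.inl b0 ∧ (b0 = s' ∨ b0 = t') := by
    rcases hb' with rfl | rfl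
    exacts [⟨s', rfl, Or.inl rfl⟩, ⟨t', rfl, Or.inr rfl⟩]
  -- pull back the two pieces
  obtain ⟨p0, hp0⟩ := apex_pullback A2.reverse
    (by intro z hz; exact hinlA z (by simpa [Walk.support_reverse] using hz)) s a0 rfl ha0
  obtain ⟨q0, hq0⟩ := apex_pullback B'.reverse
    (by intro z hz; exact hinlB z (by simpa [Walk.support_reverse] using hz)) t b0 rfl hb0
  have hp0path : p0.IsPath := by
    rw [Walk.isPath_def]
    have h2 : (p0.support.map (Sum.inl : V → V ⊕ Bool)).Nodup := by
      rw [← hp0]; simpa [Walk.support_reverse] using hndA2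
    exact h2.of_map
  have hq0path : q0.IsPath := by
    rw [Walk.isPath_def]
    have h2 : (q0.support.map (Sum.inl : V → V ⊕ Bool)).Nodup := by
      rw [← hq0]; simpa [Walk.support_reverse] using hndB'
    exact h2.of_map
  have hmemp : ∀ z ∈ p0.support, Sum.inl z ∈ A2.support := by
    intro z hz
    have : Sum.inl z ∈ A2.reverse.support := by
      rw [hp0]; exact List.mem_map_of_mem hz
    simpa [Walk.support_reverse] using this
  have hmemq : ∀ z ∈ q0.support, Sum.inl z ∈ B'.support := by
    intro z hz
    have : Sum.inl z ∈ B'.reverse.support := by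
      rw [hq0]; exact List.mem_map_of_mem hz
    simpa [Walk.support_reverse] using this
  have hdisj : Disjoint (suppSet p0) (suppSet q0) := by
    rw [Set.disjoint_left]
    intro z hzp hzq
    exact hdisjAB _ (by simpa using hmemp z hzp) _ (List.mem_cons_of_mem _ (hmemq z hzq)) rfl
  have hamem : Sum.inl a0 ∈ A2.support := by rw [← ha0]; exact A2.start_mem_support
  have hbmem : Sum.inl b0 ∈ B'.support := by rw [← hb0]; exact B'.start_mem_support
  have hne : a0 ≠ b0 := by
    rintro rfl
    exact hdisjAB _ (by simpa using hamem) _ (List.mem_cons_of_mem _ hbmem) rfl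
  have hset : ({a0, b0} : Set V) = {s', t'} := by
    rcases ha0mem with rfl | rfl <;> rcases hb0mem with rfl | rfl
    · exact absurd rfl hne
    · rfl
    · exact Set.pair_comm _ _
    · exact absurd rfl hne
  -- lengths
  have hlenp : p0.length = A2.length := by
    have := congrArg List.length hp0
    simpa [Walk.length_support, Walk.support_reverse] using this.symm
  have hlenq : q0.length = B'.length := by
    have := congrArg List.length hq0
    simpa [Walk.length_support, Walk.support_reverse] using this.symm
  have hlenP : P.length = A.length + B.length := by
    conv_lhs => rw [← hspec]
    exact Walk.length_append _ _
  have hlenA : A.length = A2.length + 1 := by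
    have : A.reverse.length = A2.length + 1 := by rw [hAeq]; simp
    simpa using this
  have hlenB : B.length = B'.length + 1 := by rw [hBeq]; simp
  exact ⟨a0, b0, hset, p0, q0, hp0path, hq0path, hdisj, by omega⟩


end ApexHelpers

/-- `G` contains two vertex-disjoint paths between `{s,t}` and `{s',t'}` (covering all
four endpoints) of total length at least `k` iff the graph obtained by adding an apex
`u` adjacent to `s, t` and an apex `v` adjacent to `s', t'` contains a cycle of length
at least `k + 4` through both `u` and `v`. -/
theorem two_disjoint_paths_iff_apex_cycle {V : Type*} [Fintype V] (G : SimpleGraph V)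
    (s t s' t' : V) (hst : s ≠ t) (hst' : s' ≠ t') (k : ℕ) :
    (∃ a b : V, ({a, b} : Set V) = {s', t'} ∧
        ∃ (p : G.Walk s a) (q : G.Walk t b), p.IsPath ∧ q.IsPath ∧
          Disjoint (suppSet p) (suppSet q) ∧ k ≤ p.length + q.length) ↔
    (∃ (w : V ⊕ Bool) (C : (addTwoApexes G s t s' t').Walk w w), C.IsCycle ∧
        Sum.inr false ∈ C.support ∧ Sum.inr true ∈ C.support ∧ k + 4 ≤ C.length) := by
  classical
  constructor
  · rintro ⟨a, b, hab, p, q, hp, hq, hdisj, hk⟩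
    have ha : a = s' ∨ a = t' := by
      have : a ∈ ({s', t'} : Set V) := by rw [← hab]; exact Set.mem_insert _ _
      simpa using this
    have hb : b = s' ∨ b = t' := by
      have : b ∈ ({s', t'} : Set V) := by
        rw [← hab]; exact Set.mem_insert_of_mem _ rfl
      simpa using this
    let f : G →g addTwoApexes G s t s' t' := ⟨Sum.inl, fun h => apex_adj_inl_inl.mpr h⟩
    have hfcoe : ⇑f = Sum.inl := rfl
    have h_us : (addTwoApexes G s t s' t').Adj (Sum.inr false) (Sum.inl s) :=
      apex_adj_u.mpr (Or.inl rfl)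
    have h_tu : (addTwoApexes G s t s' t').Adj (Sum.inl t) (Sum.inr false) :=
      (apex_adj_u.mpr (Or.inr rfl)).symm
    have h_av : (addTwoApexes G s t s' t').Adj (Sum.inl a) (Sum.inr true) :=
      (apex_adj_v.mpr (by rcases ha with rfl | rfl; exacts [Or.inl rfl, Or.inr rfl])).symm
    have h_vb : (addTwoApexes G s t s' t').Adj (Sum.inr true) (Sum.inl b) :=
      apex_adj_v.mpr (by rcases hb with rfl | rfl; exacts [Or.inl rfl, Or.inr rfl])
    set X : (addTwoApexes G s t s' t').Walk (Sum.inl s) (Sum.inr false) :=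
      (p.map f).append (Walk.cons h_av (Walk.cons h_vb
        ((q.map f).reverse.append (Walk.cons h_tu Walk.nil)))) with hX
    have hdisj' : ∀ x, x ∈ p.support → x ∉ q.support := fun x hx =>
      Set.disjoint_left.mp hdisj hx
    have hXsupp : X.support = (p.support.map (Sum.inl : V → V ⊕ Bool)) ++
        (Sum.inr true :: ((q.support.map (Sum.inl : V → V ⊕ Bool)).reverse ++
          [Sum.inr false])) := by
      simp [hX, Walk.support_append, Walk.support_map, Walk.support_reverse, hfcoe]
    have hXpath : X.IsPath := by
      rw [Walk.isPath_def, hXsupp]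
      rw [List.nodup_append]
      refine ⟨hp.support_nodup.map Sum.inl_injective, ?_, ?_⟩
      · rw [List.nodup_cons]
        constructor
        · simp
        · rw [List.nodup_append]
          refine ⟨by simpa using hq.support_nodup.map (Sum.inl_injective (α := V) (β := Bool)), by simp, ?_⟩
          simp [List.disjoint_left]
      · intro x hx
        simp only [List.mem_map] at hx
        obtain ⟨x0, hx0, rfl⟩ := hx
        simp only [List.mem_cons, List.mem_append, List.mem_reverse, List.mem_map]
        intro b hb hxb; subst hxb; revert hb
        rintro (h | h | h)
        · exact absurd h (by simp)
        · obtain ⟨y0, hy0, hy⟩ := h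
          obtain rfl := Sum.inl.inj hy
          exact hdisj' _ hx0 hy0
        · simp at h
    have hXedge : s(Sum.inr false, Sum.inl s) ∉ X.edges := by
      simp only [hX, Walk.edges_append, Walk.edges_cons, Walk.edges_reverse, Walk.edges_map,
        List.mem_append, List.mem_cons, List.mem_reverse, List.mem_map]
      push_neg
      refine ⟨?_, ?_, ?_, ?_, ?_⟩
      · intro e he h
        induction e with
        | h x y => rw [hfcoe] at h; rw [Sym2.map_pair_eq, Sym2.eq_iff] at h; simp at h
      · simp [Sym2.eq_iff, hfcoe]
      · simp [Sym2.eq_iff]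
      · intro e he h
        induction e with
        | h x y => rw [hfcoe] at h; rw [Sym2.map_pair_eq, Sym2.eq_iff] at h; simp at h
      · constructor
        · simp only [hfcoe, Sym2.eq_iff, ne_eq]
          rintro (⟨h1, h2⟩ | ⟨h1, h2⟩)
          · simp at h1
          · exact hst (Sum.inl.inj h2)
        · simp
    refine ⟨Sum.inr false, Walk.cons h_us X, (Walk.cons_isCycle_iff X h_us).mpr ⟨hXpath, hXedge⟩,
      Walk.start_mem_support _, ?_, ?_⟩
    · rw [Walk.support_cons]
      refine List.mem_cons_of_mem _ ?_
      rw [hXsupp]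
      simp
    · rw [Walk.length_cons]
      have : X.length = p.length + q.length + 3 := by
        simp [hX, Walk.length_append, Walk.length_cons, Walk.length_reverse, Walk.length_map]
        omega
      omega
  · rintro ⟨w, C, hC, huC, hvC, hlen⟩
    have hCnil : ¬C.Nil := Walk.not_nil_iff_lt_length.mpr (by omega)
    set C1 := C.rotate _ huC with hC1def
    have hC1 : C1.IsCycle := hC.rotate huC
    have hlen1 : C1.length = C.length := by
      have := (C.rotate_edges _ huC).perm.length_eq
      rw [Walk.length_edges, Walk.length_edges] at this; exact this
    have hvtail : Sum.inr true ∈ C.support.tail :=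
      mem_support_tail_of_closed C hCnil hvC
    have hv1 : Sum.inr true ∈ C1.support := by
      have := ((C.support_rotate _ huC).mem_iff).mpr hvtail
      exact List.mem_of_mem_tail this
    have hC1nil : ¬C1.Nil := Walk.not_nil_iff_lt_length.mpr (by omega)
    obtain ⟨x, h1, rest, hC1eq⟩ := Walk.not_nil_iff.mp hC1nil
    rw [hC1eq] at hC1 hv1
    rw [Walk.cons_isCycle_iff] at hC1
    obtain ⟨hrestpath, hedge⟩ := hC1
    have hlenrest : rest.length + 1 = C.length := by
      rw [hC1eq] at hlen1
      simpa using hlen1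
    have hx : x = Sum.inl s ∨ x = Sum.inl t := apex_adj_u.mp h1
    have hxu : Sum.inr false ≠ x := h1.ne
    have hRnil : ¬rest.reverse.Nil := Walk.not_nil_of_ne hxu
    obtain ⟨y, h2, rest2, hReq⟩ := Walk.not_nil_iff.mp hRnil
    have hy : y = Sum.inl s ∨ y = Sum.inl t := apex_adj_u.mp h2
    set P0 := rest2.reverse with hP0def
    have hresteq : rest = P0.append (Walk.cons h2.symm Walk.nil) := by
      have h3 : rest.reverse.reverse = rest := Walk.reverse_reverse rest
      rw [← h3, hReq]
      simp [Walk.reverse_cons, hP0def]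
    have hrestsupp : rest.support = P0.support ++ [Sum.inr false] := by
      rw [hresteq]
      simp [Walk.support_append]
    have hndrest : (P0.support ++ [Sum.inr false]).Nodup := by
      rw [← hrestsupp]; exact hrestpath.support_nodup
    rw [List.nodup_append] at hndrest
    have huP0 : Sum.inr false ∉ P0.support := fun h => hndrest.2.2 _ h _ (by simp) rfl
    have hvP0 : Sum.inr true ∈ P0.support := by
      have h : Sum.inr true ∈ rest.support := by simpa using hv1
      rw [hrestsupp] at h
      rcases List.mem_append.mp h with h | h
      · exact h
      · simp at h
    have hP0path : P0.IsPath := by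
      rw [Walk.isPath_def]
      exact hndrest.1
    have hxy : x ≠ y := by
      rintro rfl
      apply hedge
      rw [hresteq, Walk.edges_append]
      exact List.mem_append_right _ (by simp [Sym2.eq_swap])
    have hlenP0 : P0.length + 2 = C.length := by
      have : rest.length = P0.length + 1 := by
        rw [hresteq]; simp [Walk.length_append]
      omega
    rcases hx with rfl | rfl
    · rcases hy with rfl | rfl
      · exact absurd rfl hxy
      · obtain ⟨a, b, hab, p, q, hp, hq, hd, hl⟩ :=
          apex_extract hst' P0 hP0path huP0 hvP0
        exact ⟨a, b, hab, p, q, hp, hq, hd, by omega⟩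
    · rcases hy with rfl | rfl
      · obtain ⟨a, b, hab, p, q, hp, hq, hd, hl⟩ :=
          apex_extract hst' rest2 (by rw [hP0def] at hP0path; simpa using hP0path)
            (by intro h; exact huP0 (by simp [hP0def, Walk.support_reverse, h]))
            (by have := hvP0; rw [hP0def, Walk.support_reverse, List.mem_reverse] at this; exact this)
        refine ⟨a, b, hab, p, q, hp, hq, hd, ?_⟩
        have : rest2.length = P0.length := by simp [hP0def]
        omega
      · exact absurd rfl hxy
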